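/- Let G be a finite weighted graph with distinct edge weights, F its minimum spanning forest, and e ∈ F a tree edge whose removal splits its tree T into components T₀ and T₁. Then the minimum spanning forest of G ∖ {e} is obtained from F ∖ {e} by adding the minimum-weight edge of G ∖ {e} connecting T₀ and T₁, if such an edge exists, and is F ∖ {e} otherwise. -/

import Mathlib

/-- `F` is a spanning forest of the graph with edge set `E`: it is a subset of `E`,
acyclic, and has the same reachability relation as `E`. -/
def IsSpanningForest (V : Type) (E F : Finset (Sym2 V)) : Prop :=
  F ⊆ E ∧ (SimpleGraph.fromEdgeSet (↑F : Set (Sym2 V))).IsAcyclic ∧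
    ∀ u v : V, (SimpleGraph.fromEdgeSet (↑E : Set (Sym2 V))).Reachable u v ↔
      (SimpleGraph.fromEdgeSet (↑F : Set (Sym2 V))).Reachable u v

/-- `F` is a minimum spanning forest of the graph with edge set `E` and weights `w`. -/
def IsMSF (V : Type) (w : Sym2 V → ℝ) (E F : Finset (Sym2 V)) : Prop :=
  IsSpanningForest V E F ∧
    ∀ F' : Finset (Sym2 V), IsSpanningForest V E F' → ∑ e ∈ F, w e ≤ ∑ e ∈ F', w e


open SimpleGraph

variable {V : Type}

lemma MWR.reachable_of_forall_adj {G H : SimpleGraph V}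
    (h : ∀ a b : V, G.Adj a b → H.Reachable a b) {x y : V}
    (hr : G.Reachable x y) : H.Reachable x y := by
  obtain ⟨W⟩ := hr
  induction W with
  | nil => exact Reachable.refl _
  | cons ha _ ih => exact (h _ _ ha).trans ih

lemma MWR.reachable_sup_edge {G : SimpleGraph V} {x y s t : V}
    (h : (G ⊔ SimpleGraph.fromEdgeSet {s(x, y)}).Reachable s t) :
    G.Reachable s t ∨ (G.Reachable s x ∧ G.Reachable y t) ∨
      (G.Reachable s y ∧ G.Reachable x t) := by
  obtain ⟨W⟩ := h
  induction W with
  | nil => exact Or.inl (Reachable.refl _)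
  | @cons a c d ha W ih =>
    rcases ha with hg | he
    · rcases ih with h1 | ⟨h1, h2⟩ | ⟨h1, h2⟩
      · exact Or.inl (hg.reachable.trans h1)
      · exact Or.inr (Or.inl ⟨hg.reachable.trans h1, h2⟩)
      · exact Or.inr (Or.inr ⟨hg.reachable.trans h1, h2⟩)
    · rw [fromEdgeSet_adj, Set.mem_singleton_iff, Sym2.eq_iff] at he
      rcases he.1 with ⟨rfl, rfl⟩ | ⟨rfl, rfl⟩
      · rcases ih with h1 | ⟨h1, h2⟩ | ⟨h1, h2⟩
        · exact Or.inr (Or.inl ⟨Reachable.refl _, h1⟩)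
        · exact Or.inl (h1.symm.trans h2)
        · exact Or.inl h2
      · rcases ih with h1 | ⟨h1, h2⟩ | ⟨h1, h2⟩
        · exact Or.inr (Or.inr ⟨Reachable.refl _, h1⟩)
        · exact Or.inl h2
        · exact Or.inl (h1.symm.trans h2)


lemma MWR.mem_of_reachable {G : SimpleGraph V} {S : Set V}
    (h : ∀ a b : V, G.Adj a b → a ∈ S → b ∈ S) {x y : V}
    (hr : G.Reachable x y) (hx : x ∈ S) : y ∈ S := by
  obtain ⟨W⟩ := hr
  induction W with
  | nil => exact hx
  | cons ha _ ih => exact ih (h _ _ ha hx)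

lemma MWR.isAcyclic_mono {G H : SimpleGraph V} (hle : G ≤ H) (h : H.IsAcyclic) :
    G.IsAcyclic := by
  intro a c hc
  exact h (c.map (Hom.ofLE hle))
    (hc.map (fun x y hxy => hxy))

lemma MWR.isAcyclic_sup_edge {G : SimpleGraph V} {x y : V}
    (hac : G.IsAcyclic) (hnr : ¬ G.Reachable x y) :
    (G ⊔ SimpleGraph.fromEdgeSet {s(x, y)}).IsAcyclic := by
  intro a c hc
  by_cases hmem : s(x, y) ∈ c.edges
  · have h2 := (adj_and_reachable_delete_edges_iff_exists_cycle
      (G := G ⊔ SimpleGraph.fromEdgeSet {s(x, y)})).2 ⟨a, c, hc, hmem⟩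
    refine hnr (h2.2.mono ?_)
    intro p q hpq
    rcases hpq.1 with h | h
    · exact h
    · exact absurd h hpq.2
  · refine hac (c.transfer G fun e he => ?_) (hc.transfer _)
    have h1 := c.edges_subset_edgeSet he
    rw [edgeSet_sup] at h1
    rcases h1 with h1 | h1
    · exact h1
    · rw [edgeSet_fromEdgeSet] at h1
      exact absurd (h1.1 ▸ he) hmem

lemma MWR.exists_crossing {H : SimpleGraph V} (hac : H.IsAcyclic)
    {T₀ T₁ : Set V} (hdisj : ∀ z, z ∈ T₀ → z ∈ T₁ → False)
    (hclose : ∀ a b : V, H.Adj a b → a ∈ T₀ ∪ T₁ → b ∈ T₀ ∪ T₁)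
    {x v : V} (W : H.Walk x v) (hW : W.IsPath) (hx : x ∈ T₀) (hv : v ∈ T₁) :
    ∃ p q : V, H.Adj p q ∧ p ∈ T₀ ∧ q ∈ T₁ ∧
      ¬ (H \ SimpleGraph.fromEdgeSet {s(p, q)}).Reachable x v := by
  induction W with
  | nil => exact absurd hv (fun h => hdisj _ hx h)
  | @cons a c d ha W ih =>
    rcases hclose a c ha (Or.inl hx) with hc | hc
    · obtain ⟨p, q, hpq, hp, hq, hnr⟩ := ih (hW.of_cons) hc hv
      refine ⟨p, q, hpq, hp, hq, fun hr => hnr ?_⟩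
      have hadj : (H \ SimpleGraph.fromEdgeSet {s(p, q)}).Adj a c := by
        rw [sdiff_adj, fromEdgeSet_adj]
        refine ⟨ha, fun hcontra => ?_⟩
        rw [Set.mem_singleton_iff, Sym2.eq_iff] at hcontra
        rcases hcontra.1 with ⟨rfl, rfl⟩ | ⟨rfl, rfl⟩
        · exact hdisj _ hc hq
        · exact hdisj _ hx hq
      exact hadj.symm.reachable.trans hr
    · have hbr : ¬ (H \ SimpleGraph.fromEdgeSet {s(a, c)}).Reachable a c := by
        have := (isAcyclic_iff_forall_adj_isBridge.mp hac) ha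
        exact this
      refine ⟨a, c, ha, hx, hc, fun hr => hbr ?_⟩
      have hcv : (H \ SimpleGraph.fromEdgeSet {s(a, c)}).Reachable c d := by
        refine ⟨W.transfer _ fun e he => ?_⟩
        rw [edgeSet_sdiff, Set.mem_diff]
        refine ⟨W.edges_subset_edgeSet he, fun hcontra => ?_⟩
        rw [edgeSet_fromEdgeSet] at hcontra
        have : a ∈ W.support := by
          have := hcontra.1 ▸ he
          exact W.fst_mem_support_of_mem_edges this
        exact (Walk.cons_isPath_iff _ _ |>.mp hW).2 this
      exact hr.trans hcv.symm

lemma MWR.fromEdgeSet_coe_insert [DecidableEq V] (g : Sym2 V) (s : Finset (Sym2 V)) :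
    SimpleGraph.fromEdgeSet (↑(insert g s) : Set (Sym2 V)) =
      SimpleGraph.fromEdgeSet (↑s : Set (Sym2 V)) ⊔ SimpleGraph.fromEdgeSet {g} := by
  rw [Finset.coe_insert, Set.insert_eq, fromEdgeSet_union, sup_comm]


/-- Correctness of the minimum-weight replacement (MWR) edge rule for deleting a
tree edge `e = s(u,v)` of the MSF `F`: if a minimum-weight edge `f₀` of `G ∖ {e}`
reconnecting the two components `T₀` (containing `u`) and `T₁` (containing `v`) of
`F ∖ {e}` exists, the new MSF is `(F ∖ {e}) ∪ {f₀}`; otherwise it is `F ∖ {e}`. -/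
theorem msf_delete_tree_edge {V : Type} [Fintype V] [DecidableEq V]
    (E F : Finset (Sym2 V)) (w : Sym2 V → ℝ)
    (hinj : Set.InjOn w (↑E : Set (Sym2 V)))
    (hnd : ∀ f ∈ E, ¬ f.IsDiag)
    (hF : IsMSF V w E F)
    (u v : V) (e : Sym2 V) (he : e = s(u, v)) (heF : e ∈ F) :
    (∀ f₀ ∈ E.erase e,
      (∃ a b : V, f₀ = s(a, b) ∧
        (SimpleGraph.fromEdgeSet (↑(F.erase e) : Set (Sym2 V))).Reachable u a ∧
        (SimpleGraph.fromEdgeSet (↑(F.erase e) : Set (Sym2 V))).Reachable v b) →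
      (∀ g ∈ E.erase e,
        (∃ a b : V, g = s(a, b) ∧
          (SimpleGraph.fromEdgeSet (↑(F.erase e) : Set (Sym2 V))).Reachable u a ∧
          (SimpleGraph.fromEdgeSet (↑(F.erase e) : Set (Sym2 V))).Reachable v b) →
        w f₀ ≤ w g) →
      IsMSF V w (E.erase e) (insert f₀ (F.erase e))) ∧
    ((∀ g ∈ E.erase e,
        ¬ (∃ a b : V, g = s(a, b) ∧
          (SimpleGraph.fromEdgeSet (↑(F.erase e) : Set (Sym2 V))).Reachable u a ∧
          (SimpleGraph.fromEdgeSet (↑(F.erase e) : Set (Sym2 V))).Reachable v b)) →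
      IsMSF V w (E.erase e) (F.erase e)) := by
  subst he
  obtain ⟨⟨hFsub, hFac, hFsp⟩, hFmin⟩ := hF
  have heE : s(u, v) ∈ E := hFsub heF
  have huv : u ≠ v := by
    have h := hnd _ heE
    rwa [Sym2.mk_isDiag_iff] at h
  have hGFsd : SimpleGraph.fromEdgeSet (↑F : Set (Sym2 V)) \
      SimpleGraph.fromEdgeSet {s(u, v)} =
      SimpleGraph.fromEdgeSet (↑(F.erase s(u, v)) : Set (Sym2 V)) := by
    rw [Finset.coe_erase, fromEdgeSet_sdiff]
  have hdecompF : SimpleGraph.fromEdgeSet (↑F : Set (Sym2 V)) =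
      SimpleGraph.fromEdgeSet (↑(F.erase s(u, v)) : Set (Sym2 V)) ⊔
        SimpleGraph.fromEdgeSet {s(u, v)} := by
    rw [← hGFsd, sdiff_sup_cancel (fromEdgeSet_mono
      (Set.singleton_subset_iff.2 (by exact_mod_cast heF)))]
  have hGF'le : SimpleGraph.fromEdgeSet (↑(F.erase s(u, v)) : Set (Sym2 V)) ≤
      SimpleGraph.fromEdgeSet (↑F : Set (Sym2 V)) :=
    fromEdgeSet_mono (by exact_mod_cast Finset.erase_subset _ _)
  have hGF'ac := MWR.isAcyclic_mono hGF'le hFac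
  have hb : ¬ (SimpleGraph.fromEdgeSet (↑(F.erase s(u, v)) : Set (Sym2 V))).Reachable u v := by
    have hadj : (SimpleGraph.fromEdgeSet (↑F : Set (Sym2 V))).Adj u v :=
      (fromEdgeSet_adj _).2 ⟨by exact_mod_cast heF, huv⟩
    have hbr : ¬ (SimpleGraph.fromEdgeSet (↑F : Set (Sym2 V)) \
        SimpleGraph.fromEdgeSet {s(u, v)}).Reachable u v :=
      (isBridge_iff.mp (isAcyclic_iff_forall_adj_isBridge.mp hFac hadj))
    rwa [hGFsd] at hbr
  have hcases : ∀ x y : V, (SimpleGraph.fromEdgeSet (↑F : Set (Sym2 V))).Reachable x y →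
      (SimpleGraph.fromEdgeSet (↑(F.erase s(u, v)) : Set (Sym2 V))).Reachable x y ∨
      ((SimpleGraph.fromEdgeSet (↑(F.erase s(u, v)) : Set (Sym2 V))).Reachable x u ∧
        (SimpleGraph.fromEdgeSet (↑(F.erase s(u, v)) : Set (Sym2 V))).Reachable v y) ∨
      ((SimpleGraph.fromEdgeSet (↑(F.erase s(u, v)) : Set (Sym2 V))).Reachable x v ∧
        (SimpleGraph.fromEdgeSet (↑(F.erase s(u, v)) : Set (Sym2 V))).Reachable u y) :=
    fun x y h => MWR.reachable_sup_edge (hdecompF ▸ h)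
  have hedge : ∀ x y : V, s(x, y) ∈ E →
      (SimpleGraph.fromEdgeSet (↑F : Set (Sym2 V))).Reachable x y := by
    intro x y hg
    have hne : x ≠ y := by
      have := hnd _ hg
      rwa [Sym2.mk_isDiag_iff] at this
    exact (hFsp x y).1 (Adj.reachable ((fromEdgeSet_adj _).2 ⟨by exact_mod_cast hg, hne⟩))
  have hFE'sub : F.erase s(u, v) ⊆ E.erase s(u, v) := Finset.erase_subset_erase _ hFsub
  have hGF'leE' : SimpleGraph.fromEdgeSet (↑(F.erase s(u, v)) : Set (Sym2 V)) ≤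
      SimpleGraph.fromEdgeSet (↑(E.erase s(u, v)) : Set (Sym2 V)) :=
    fromEdgeSet_mono (by exact_mod_cast hFE'sub)
  have hsumF : w s(u, v) + ∑ x ∈ F.erase s(u, v), w x = ∑ x ∈ F, w x :=
    Finset.add_sum_erase _ _ heF
  constructor
  · -- replacement edge case
    rintro f₀ hf₀E ⟨a, b, rfl, hua, hvb⟩ hmin
    have hab : a ≠ b := by
      have := hnd _ (Finset.mem_of_mem_erase hf₀E)
      rwa [Sym2.mk_isDiag_iff] at this
    have hnrab : ¬ (SimpleGraph.fromEdgeSet (↑(F.erase s(u, v)) : Set (Sym2 V))).Reachable a b :=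
      fun h => hb (hua.trans (h.trans hvb.symm))
    have hf₀notF : s(a, b) ∉ F.erase s(u, v) := fun h =>
      hnrab (Adj.reachable ((fromEdgeSet_adj _).2 ⟨by exact_mod_cast h, hab⟩))
    have hdecompF' : SimpleGraph.fromEdgeSet (↑(insert s(a, b) (F.erase s(u, v))) : Set (Sym2 V)) =
        SimpleGraph.fromEdgeSet (↑(F.erase s(u, v)) : Set (Sym2 V)) ⊔
          SimpleGraph.fromEdgeSet {s(a, b)} := MWR.fromEdgeSet_coe_insert _ _
    have hle1 : SimpleGraph.fromEdgeSet (↑(F.erase s(u, v)) : Set (Sym2 V)) ≤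
        SimpleGraph.fromEdgeSet (↑(insert s(a, b) (F.erase s(u, v))) : Set (Sym2 V)) :=
      fromEdgeSet_mono (by exact_mod_cast Finset.subset_insert _ _)
    have hinsSub : insert s(a, b) (F.erase s(u, v)) ⊆ E.erase s(u, v) :=
      Finset.insert_subset hf₀E hFE'sub
    have hruvIns : (SimpleGraph.fromEdgeSet
        (↑(insert s(a, b) (F.erase s(u, v))) : Set (Sym2 V))).Reachable u v := by
      have hadjab : (SimpleGraph.fromEdgeSet
          (↑(insert s(a, b) (F.erase s(u, v))) : Set (Sym2 V))).Adj a b :=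
        (fromEdgeSet_adj _).2 ⟨by exact_mod_cast Finset.mem_insert_self _ _, hab⟩
      exact (hua.mono hle1).trans (hadjab.reachable.trans (hvb.mono hle1).symm)
    have hspan : IsSpanningForest V (E.erase s(u, v)) (insert s(a, b) (F.erase s(u, v))) := by
      refine ⟨hinsSub, ?_, fun x y => ⟨?_, fun h => h.mono (fromEdgeSet_mono
        (by exact_mod_cast hinsSub))⟩⟩
      · rw [hdecompF']
        exact MWR.isAcyclic_sup_edge hGF'ac hnrab
      · intro h
        refine MWR.reachable_of_forall_adj ?_ h
        intro p q hpq
        rw [fromEdgeSet_adj] at hpq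
        have hpqE : s(p, q) ∈ E.erase s(u, v) := by exact_mod_cast hpq.1
        rcases hcases p q (hedge p q (Finset.mem_of_mem_erase hpqE)) with h1 | ⟨h1, h2⟩ | ⟨h1, h2⟩
        · exact h1.mono hle1
        · exact ((h1.mono hle1).trans hruvIns).trans (h2.mono hle1)
        · exact ((h1.mono hle1).trans hruvIns.symm).trans (h2.mono hle1)
    refine ⟨hspan, fun F2 hF2 => ?_⟩
    obtain ⟨hsub2, hac2, hsp2⟩ := hF2
    have hruv2 : (SimpleGraph.fromEdgeSet (↑F2 : Set (Sym2 V))).Reachable u v := by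
      refine (hsp2 u v).1 ?_
      have hadjab : (SimpleGraph.fromEdgeSet (↑(E.erase s(u, v)) : Set (Sym2 V))).Adj a b :=
        (fromEdgeSet_adj _).2 ⟨by exact_mod_cast hf₀E, hab⟩
      exact (hua.mono hGF'leE').trans (hadjab.reachable.trans (hvb.mono hGF'leE').symm)
    obtain ⟨W⟩ := hruv2
    obtain ⟨p, q, hpq, hp, hq, hnr⟩ := MWR.exists_crossing hac2
      (T₀ := {x | (SimpleGraph.fromEdgeSet (↑(F.erase s(u, v)) : Set (Sym2 V))).Reachable u x})
      (T₁ := {x | (SimpleGraph.fromEdgeSet (↑(F.erase s(u, v)) : Set (Sym2 V))).Reachable v x})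
      (fun z hz0 hz1 => hb (hz0.trans hz1.symm))
      (fun x y hxy hxm => by
        rw [fromEdgeSet_adj] at hxy
        have hxyE : s(x, y) ∈ E.erase s(u, v) := hsub2 (by exact_mod_cast hxy.1)
        rcases hcases x y (hedge x y (Finset.mem_of_mem_erase hxyE)) with h1 | ⟨h1, h2⟩ | ⟨h1, h2⟩
        · rcases hxm with hm | hm
          · exact Or.inl (hm.trans h1)
          · exact Or.inr (hm.trans h1)
        · exact Or.inr h2
        · exact Or.inl h2)
      (Walk.toPath W).1 (Walk.toPath W).2 (Reachable.refl u) (Reachable.refl v)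
    have hgF2 : s(p, q) ∈ F2 := by exact_mod_cast ((fromEdgeSet_adj _).1 hpq).1
    have hwle : w s(a, b) ≤ w s(p, q) := hmin _ (hsub2 hgF2) ⟨p, q, rfl, hp, hq⟩
    have hG2 : SimpleGraph.fromEdgeSet (↑F2 : Set (Sym2 V)) \
        SimpleGraph.fromEdgeSet {s(p, q)} =
        SimpleGraph.fromEdgeSet (↑(F2.erase s(p, q)) : Set (Sym2 V)) := by
      rw [Finset.coe_erase, fromEdgeSet_sdiff]
    rw [hG2] at hnr
    have hdecompF2 : SimpleGraph.fromEdgeSet (↑F2 : Set (Sym2 V)) =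
        SimpleGraph.fromEdgeSet (↑(F2.erase s(p, q)) : Set (Sym2 V)) ⊔
          SimpleGraph.fromEdgeSet {s(p, q)} := by
      rw [← hG2, sdiff_sup_cancel (fromEdgeSet_mono
        (Set.singleton_subset_iff.2 (by exact_mod_cast hgF2)))]
    have hle2 : SimpleGraph.fromEdgeSet (↑(F2.erase s(p, q)) : Set (Sym2 V)) ≤
        SimpleGraph.fromEdgeSet (↑F2 : Set (Sym2 V)) :=
      fromEdgeSet_mono (by exact_mod_cast Finset.erase_subset _ _)
    have hu2 : (SimpleGraph.fromEdgeSet (↑(F2.erase s(p, q)) : Set (Sym2 V))).Reachable u p ∨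
        (SimpleGraph.fromEdgeSet (↑(F2.erase s(p, q)) : Set (Sym2 V))).Reachable u q := by
      have hup : (SimpleGraph.fromEdgeSet (↑F2 : Set (Sym2 V))).Reachable u p :=
        (hsp2 u p).1 (hp.mono hGF'leE')
      rcases MWR.reachable_sup_edge (hdecompF2 ▸ hup) with h1 | ⟨h1, h2⟩ | ⟨h1, h2⟩
      · exact Or.inl h1
      · exact Or.inl h1
      · exact Or.inr h1
    have hv2 : (SimpleGraph.fromEdgeSet (↑(F2.erase s(p, q)) : Set (Sym2 V))).Reachable v q ∨
        (SimpleGraph.fromEdgeSet (↑(F2.erase s(p, q)) : Set (Sym2 V))).Reachable v p := by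
      have hvq : (SimpleGraph.fromEdgeSet (↑F2 : Set (Sym2 V))).Reachable v q :=
        (hsp2 v q).1 (hq.mono hGF'leE')
      rcases MWR.reachable_sup_edge (hdecompF2 ▸ hvq) with h1 | ⟨h1, h2⟩ | ⟨h1, h2⟩
      · exact Or.inl h1
      · exact Or.inr h1
      · exact Or.inl h1
    have hG3 : SimpleGraph.fromEdgeSet (↑(insert s(u, v) (F2.erase s(p, q))) : Set (Sym2 V)) =
        SimpleGraph.fromEdgeSet (↑(F2.erase s(p, q)) : Set (Sym2 V)) ⊔
          SimpleGraph.fromEdgeSet {s(u, v)} := MWR.fromEdgeSet_coe_insert _ _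
    have hle3 : SimpleGraph.fromEdgeSet (↑(F2.erase s(p, q)) : Set (Sym2 V)) ≤
        SimpleGraph.fromEdgeSet (↑(insert s(u, v) (F2.erase s(p, q))) : Set (Sym2 V)) :=
      fromEdgeSet_mono (by exact_mod_cast Finset.subset_insert _ _)
    have headj : (SimpleGraph.fromEdgeSet
        (↑(insert s(u, v) (F2.erase s(p, q))) : Set (Sym2 V))).Adj u v :=
      (fromEdgeSet_adj _).2 ⟨by exact_mod_cast Finset.mem_insert_self _ _, huv⟩
    have hApq : (SimpleGraph.fromEdgeSet
        (↑(insert s(u, v) (F2.erase s(p, q))) : Set (Sym2 V))).Reachable p q := by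
      rcases hu2 with h1 | h1 <;> rcases hv2 with h2 | h2
      · exact ((h1.symm.mono hle3).trans headj.reachable).trans (h2.mono hle3)
      · exact absurd (h1.trans h2.symm) hnr
      · exact absurd (h1.trans h2.symm) hnr
      · exact ((h2.symm.mono hle3).trans headj.symm.reachable).trans (h1.mono hle3)
    have hgne : s(u, v) ∉ F2.erase s(p, q) := fun h =>
      Finset.notMem_erase s(u, v) E (hsub2 (Finset.mem_of_mem_erase h))
    have hsf3 : IsSpanningForest V E (insert s(u, v) (F2.erase s(p, q))) := by
      refine ⟨Finset.insert_subset heE (((Finset.erase_subset _ _).trans hsub2).trans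
        (Finset.erase_subset _ _)), ?_, ?_⟩
      · rw [hG3]
        exact MWR.isAcyclic_sup_edge (MWR.isAcyclic_mono hle2 hac2) hnr
      · intro x y
        constructor
        · intro h
          refine MWR.reachable_of_forall_adj ?_ h
          intro c d hcd
          rw [fromEdgeSet_adj] at hcd
          by_cases hcduv : s(c, d) = s(u, v)
          · exact Adj.reachable ((fromEdgeSet_adj _).2
              ⟨by rw [hcduv]; exact_mod_cast Finset.mem_insert_self _ _, hcd.2⟩)
          · have hcdE' : s(c, d) ∈ E.erase s(u, v) :=
              Finset.mem_erase.2 ⟨hcduv, by exact_mod_cast hcd.1⟩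
            have hr2 := (hsp2 c d).1 (Adj.reachable ((fromEdgeSet_adj _).2
              ⟨by exact_mod_cast hcdE', hcd.2⟩))
            rcases MWR.reachable_sup_edge (hdecompF2 ▸ hr2) with h1 | ⟨h1, h2⟩ | ⟨h1, h2⟩
            · exact h1.mono hle3
            · exact ((h1.mono hle3).trans hApq).trans (h2.mono hle3)
            · exact ((h1.mono hle3).trans hApq.symm).trans (h2.mono hle3)
        · intro h
          exact h.mono (fromEdgeSet_mono (by
            exact_mod_cast Finset.insert_subset heE (((Finset.erase_subset _ _).trans
              hsub2).trans (Finset.erase_subset _ _))))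
    have hmain := hFmin _ hsf3
    rw [Finset.sum_insert hgne] at hmain
    have hsum2 : w s(p, q) + ∑ x ∈ F2.erase s(p, q), w x = ∑ x ∈ F2, w x :=
      Finset.add_sum_erase _ _ hgF2
    rw [Finset.sum_insert hf₀notF]
    linarith [hsumF, hmain, hsum2, hwle]
  · -- no replacement edge exists
    intro hno
    have hspan : IsSpanningForest V (E.erase s(u, v)) (F.erase s(u, v)) := by
      refine ⟨hFE'sub, hGF'ac, fun x y => ⟨?_, fun h => h.mono hGF'leE'⟩⟩
      intro h
      refine MWR.reachable_of_forall_adj ?_ h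
      intro p q hpq
      rw [fromEdgeSet_adj] at hpq
      have hpqE : s(p, q) ∈ E.erase s(u, v) := by exact_mod_cast hpq.1
      rcases hcases p q (hedge p q (Finset.mem_of_mem_erase hpqE)) with h1 | ⟨h1, h2⟩ | ⟨h1, h2⟩
      · exact h1
      · exact absurd ⟨p, q, rfl, h1.symm, h2⟩ (hno _ hpqE)
      · exact absurd ⟨q, p, Sym2.eq_swap.symm, h2, h1.symm⟩ (hno _ hpqE)
    refine ⟨hspan, fun F'' hF'' => ?_⟩
    obtain ⟨hsub'', hac'', hsp''⟩ := hF''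
    have henotF'' : s(u, v) ∉ F'' := fun h => Finset.notMem_erase _ _ (hsub'' h)
    have hnr'' : ¬ (SimpleGraph.fromEdgeSet (↑F'' : Set (Sym2 V))).Reachable u v := by
      intro h
      refine hb (MWR.mem_of_reachable
        (S := {x | (SimpleGraph.fromEdgeSet (↑(F.erase s(u, v)) : Set (Sym2 V))).Reachable u x})
        ?_ h (Reachable.refl u))
      intro p q hpq hpS
      rw [fromEdgeSet_adj] at hpq
      have hpqE : s(p, q) ∈ E.erase s(u, v) := hsub'' (by exact_mod_cast hpq.1)
      rcases hcases p q (hedge p q (Finset.mem_of_mem_erase hpqE)) with h1 | ⟨h1, h2⟩ | ⟨h1, h2⟩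
      · exact hpS.trans h1
      · exact absurd ⟨p, q, rfl, hpS, h2⟩ (hno _ hpqE)
      · exact h2
    have hsf''' : IsSpanningForest V E (insert s(u, v) F'') := by
      refine ⟨Finset.insert_subset heE (hsub''.trans (Finset.erase_subset _ _)), ?_, ?_⟩
      · rw [MWR.fromEdgeSet_coe_insert]
        exact MWR.isAcyclic_sup_edge hac'' hnr''
      · intro x y
        constructor
        · intro h
          refine MWR.reachable_of_forall_adj ?_ h
          intro p q hpq
          rw [fromEdgeSet_adj] at hpq
          by_cases hpquv : s(p, q) = s(u, v)
          · exact Adj.reachable ((fromEdgeSet_adj _).2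
              ⟨by rw [hpquv]; exact_mod_cast Finset.mem_insert_self _ _, hpq.2⟩)
          · have hpqE' : s(p, q) ∈ E.erase s(u, v) :=
              Finset.mem_erase.2 ⟨hpquv, by exact_mod_cast hpq.1⟩
            have hr := (hsp'' p q).1 (Adj.reachable ((fromEdgeSet_adj _).2
              ⟨by exact_mod_cast hpqE', hpq.2⟩))
            exact hr.mono (fromEdgeSet_mono (by exact_mod_cast Finset.subset_insert _ _))
        · intro h
          exact h.mono (fromEdgeSet_mono (by
            exact_mod_cast Finset.insert_subset heE (hsub''.trans (Finset.erase_subset _ _))))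
    have hmain := hFmin _ hsf'''
    rw [Finset.sum_insert henotF''] at hmain
    linarith [hsumF, hmain]
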